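/- Let γ ∈ ℂ with γ ≠ 0 and c ∈ ℝ. Put c' = √(c² + 4|γ|²), ξ₀ = (c − c')/(2i·conj(γ)), α₂ = 1/√(1 + |ξ₀|²) and α₃ = −ξ₀/√(1 + |ξ₀|²). Then |α₂|² + |α₃|² = 1 and for all ξ ∈ ℂ: γ + c·i·ξ + conj(γ)·ξ² = c'·i·(α₂ξ + α₃)·(−conj(α₃)ξ + conj(α₂)). -/

import Mathlib

/-- The explicit rotation taking the section `η = γ + c i ξ + γ̄ ξ²` (γ ≠ 0) to the
normal form `η' = √(c² + 4|γ|²) i ξ'`. -/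
theorem rotation_to_normal_form (γ : ℂ) (hγ : γ ≠ 0) (c : ℝ) :
    let c' : ℝ := Real.sqrt (c ^ 2 + 4 * ‖γ‖ ^ 2)
    let ξ₀ : ℂ := (((c : ℂ) - (c' : ℂ))) / (2 * Complex.I * (starRingEnd ℂ) γ)
    let α₂ : ℂ := 1 / ((Real.sqrt (1 + ‖ξ₀‖ ^ 2) : ℝ) : ℂ)
    let α₃ : ℂ := -ξ₀ / ((Real.sqrt (1 + ‖ξ₀‖ ^ 2) : ℝ) : ℂ)
    ‖α₂‖ ^ 2 + ‖α₃‖ ^ 2 = 1 ∧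
      ∀ ξ : ℂ,
        γ + (c : ℂ) * Complex.I * ξ + (starRingEnd ℂ) γ * ξ ^ 2 =
          (c' : ℂ) * Complex.I * (α₂ * ξ + α₃) *
            (-(starRingEnd ℂ) α₃ * ξ + (starRingEnd ℂ) α₂) := by
  intro c' ξ₀ α₂ α₃
  have hγb : (starRingEnd ℂ) γ ≠ 0 := by simpa using hγ
  have habs : (0:ℝ) < ‖γ‖ := norm_pos_iff.mpr hγ
  have hr : (0:ℝ) ≤ c ^ 2 + 4 * ‖γ‖ ^ 2 := by positivity
  have hc'sq : c' ^ 2 = c ^ 2 + 4 * ‖γ‖ ^ 2 := Real.sq_sqrt hr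
  have hc'nn : 0 ≤ c' := Real.sqrt_nonneg _
  have hclt : c < c' := by nlinarith
  have hclt' : -c < c' := by nlinarith
  have qne : ((c' : ℂ) - c) ≠ 0 := by
    rw [show ((c' : ℂ) - c) = ((c' - c : ℝ) : ℂ) by push_cast; ring]
    exact_mod_cast Complex.ofReal_ne_zero.mpr (by linarith)
  have Dne : ((c' : ℂ) + c) ≠ 0 := by
    rw [show ((c' : ℂ) + c) = ((c' + c : ℝ) : ℂ) by push_cast; ring]
    exact_mod_cast Complex.ofReal_ne_zero.mpr (by linarith)
  have hden : (2 * Complex.I * (starRingEnd ℂ) γ) ≠ 0 := by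
    simp [Complex.I_ne_zero, hγ]
  have e1 : ξ₀ * (2 * Complex.I * (starRingEnd ℂ) γ) = (c : ℂ) - c' :=
    div_mul_cancel₀ _ hden
  have e2 : (starRingEnd ℂ) ξ₀ * (2 * Complex.I * γ) = (c' : ℂ) - c := by
    have h := congrArg (starRingEnd ℂ) e1
    simp only [map_mul, map_sub, Complex.conj_I, Complex.conj_ofReal, map_ofNat,
      Complex.conj_conj] at h
    linear_combination -h
  have habs2 : ((‖γ‖ : ℝ) : ℂ) ^ 2 = γ * (starRingEnd ℂ) γ := by
    rw [← Complex.ofReal_pow, Complex.sq_norm]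
    exact_mod_cast (Complex.mul_conj γ).symm
  have e3 : ((c' : ℂ)) ^ 2 = (c : ℂ) ^ 2 + 4 * (γ * (starRingEnd ℂ) γ) := by
    rw [show ((c' : ℂ)) ^ 2 = ((c' ^ 2 : ℝ) : ℂ) by push_cast; ring, hc'sq]
    push_cast
    rw [habs2]
  have hspos : (0:ℝ) < 1 + ‖ξ₀‖ ^ 2 := by positivity
  have hSne : ((Real.sqrt (1 + ‖ξ₀‖ ^ 2) : ℝ) : ℂ) ≠ 0 := by
    exact_mod_cast Complex.ofReal_ne_zero.mpr (ne_of_gt (Real.sqrt_pos.mpr hspos))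
  have habs3 : ((‖ξ₀‖ : ℝ) : ℂ) ^ 2 = ξ₀ * (starRingEnd ℂ) ξ₀ := by
    rw [← Complex.ofReal_pow, Complex.sq_norm]
    exact_mod_cast (Complex.mul_conj ξ₀).symm
  have e4 : ((Real.sqrt (1 + ‖ξ₀‖ ^ 2) : ℝ) : ℂ) ^ 2
      = 1 + ξ₀ * (starRingEnd ℂ) ξ₀ := by
    rw [show ((Real.sqrt (1 + ‖ξ₀‖ ^ 2) : ℝ) : ℂ) ^ 2
        = ((Real.sqrt (1 + ‖ξ₀‖ ^ 2) ^ 2 : ℝ) : ℂ) by push_cast; ring,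
      Real.sq_sqrt hspos.le]
    push_cast
    rw [habs3]
  have hI : Complex.I ^ 2 = -1 := Complex.I_sq
  -- key scalar identity
  have e12 : ((c : ℂ) - c') * ((c' : ℂ) - c)
      = ξ₀ * (2 * Complex.I * (starRingEnd ℂ) γ)
        * ((starRingEnd ℂ) ξ₀ * (2 * Complex.I * γ)) := by
    rw [e1, e2]
  have hP : ξ₀ * (starRingEnd ℂ) ξ₀ * ((c' : ℂ) + c) = (c' : ℂ) - c := by
    apply mul_right_cancel₀ qne
    linear_combination (ξ₀ * (starRingEnd ℂ) ξ₀) * e3 + e12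
      + 4 * γ * (starRingEnd ℂ) γ * ξ₀ * (starRingEnd ℂ) ξ₀ * hI
  have hA : (starRingEnd ℂ) γ * (1 + ξ₀ * (starRingEnd ℂ) ξ₀)
      = (c' : ℂ) * Complex.I * (starRingEnd ℂ) ξ₀ := by
    apply mul_right_cancel₀ (show (2 * Complex.I * γ) ≠ 0 by simp [Complex.I_ne_zero, hγ])
    linear_combination (-(c' : ℂ) * Complex.I) * e2
      + (Complex.I / 2) * ((c' : ℂ) - c) * hP
      - (Complex.I / 2) * (1 + ξ₀ * (starRingEnd ℂ) ξ₀) * e3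
  have hG : γ * (1 + ξ₀ * (starRingEnd ℂ) ξ₀) = -((c' : ℂ) * Complex.I * ξ₀) := by
    apply mul_right_cancel₀ hden
    linear_combination ((c' : ℂ) * Complex.I) * e1
      + (Complex.I / 2) * ((c' : ℂ) - c) * hP
      - (Complex.I / 2) * (1 + ξ₀ * (starRingEnd ℂ) ξ₀) * e3
  have hB : (c : ℂ) * Complex.I * (1 + ξ₀ * (starRingEnd ℂ) ξ₀)
      = (c' : ℂ) * Complex.I * (1 - ξ₀ * (starRingEnd ℂ) ξ₀) := by
    apply mul_right_cancel₀ Dne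
    linear_combination ((c : ℂ) + c') * Complex.I * hP
  have hSabs : ‖((Real.sqrt (1 + ‖ξ₀‖ ^ 2) : ℝ) : ℂ)‖
      = Real.sqrt (1 + ‖ξ₀‖ ^ 2) := by
    rw [Complex.norm_real, Real.norm_eq_abs, abs_of_nonneg (Real.sqrt_nonneg _)]
  constructor
  · show ‖α₂‖ ^ 2 + ‖α₃‖ ^ 2 = 1
    have h2 : ‖α₂‖ = 1 / Real.sqrt (1 + ‖ξ₀‖ ^ 2) := by
      rw [show α₂ = 1 / ((Real.sqrt (1 + ‖ξ₀‖ ^ 2) : ℝ) : ℂ) from rfl,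
        norm_div, norm_one, hSabs]
    have h3 : ‖α₃‖ = ‖ξ₀‖ / Real.sqrt (1 + ‖ξ₀‖ ^ 2) := by
      rw [show α₃ = -ξ₀ / ((Real.sqrt (1 + ‖ξ₀‖ ^ 2) : ℝ) : ℂ) from rfl,
        norm_div, norm_neg, hSabs]
    rw [h2, h3, div_pow, div_pow, one_pow, Real.sq_sqrt hspos.le]
    field_simp
  · intro ξ
    have hc2 : (starRingEnd ℂ) α₂ = α₂ := by
      show (starRingEnd ℂ) (1 / ((Real.sqrt (1 + ‖ξ₀‖ ^ 2) : ℝ) : ℂ)) = _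
      rw [map_div₀, map_one, Complex.conj_ofReal]
    have hc3 : (starRingEnd ℂ) α₃
        = -(starRingEnd ℂ) ξ₀ / ((Real.sqrt (1 + ‖ξ₀‖ ^ 2) : ℝ) : ℂ) := by
      show (starRingEnd ℂ) (-ξ₀ / ((Real.sqrt (1 + ‖ξ₀‖ ^ 2) : ℝ) : ℂ)) = _
      rw [map_div₀, map_neg, Complex.conj_ofReal]
    have hprod : (α₂ * ξ + α₃) * (-(starRingEnd ℂ) α₃ * ξ + (starRingEnd ℂ) α₂)
          * ((Real.sqrt (1 + ‖ξ₀‖ ^ 2) : ℝ) : ℂ) ^ 2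
        = (ξ - ξ₀) * ((starRingEnd ℂ) ξ₀ * ξ + 1) := by
      rw [hc2, hc3,
        show α₂ = 1 / ((Real.sqrt (1 + ‖ξ₀‖ ^ 2) : ℝ) : ℂ) from rfl,
        show α₃ = -ξ₀ / ((Real.sqrt (1 + ‖ξ₀‖ ^ 2) : ℝ) : ℂ) from rfl]
      field_simp
      ring
    apply mul_right_cancel₀ (pow_ne_zero 2 hSne)
    have hRHS : (c' : ℂ) * Complex.I * (α₂ * ξ + α₃)
          * (-(starRingEnd ℂ) α₃ * ξ + (starRingEnd ℂ) α₂)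
          * ((Real.sqrt (1 + ‖ξ₀‖ ^ 2) : ℝ) : ℂ) ^ 2
        = (c' : ℂ) * Complex.I * ((ξ - ξ₀) * ((starRingEnd ℂ) ξ₀ * ξ + 1)) := by
      rw [mul_assoc, mul_assoc, ← mul_assoc (α₂ * ξ + α₃), hprod]
    rw [hRHS, e4]
    linear_combination ξ ^ 2 * hA + ξ * hB + hG
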